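/- Any linear combination φ(K,L) = λ̄₁·K + λ̄₂·L + λ̄₃·(a·K^(−r) + (1−a)·L^(−r))^(−1/r) with λ̄₁ < 0, λ̄₂ < 0, λ̄₃ > 0 is concave on the open positive quadrant. -/

import Mathlib

open Real

/-- Weighted power mean with exponent `p < 1` is at most the arithmetic mean. -/
private lemma pm_le_am {p b t1 t2 : ℝ} (hp1 : p < 1) (hp0 : p ≠ 0)
    (hb0 : 0 < b) (hb1 : b < 1) (ht1 : 0 < t1) (ht2 : 0 < t2) :
    (b * t1 ^ p + (1 - b) * t2 ^ p) ^ (1 / p) ≤ b * t1 + (1 - b) * t2 := by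
  have hb1' : (0:ℝ) < 1 - b := by linarith
  have ht1p : (0:ℝ) < t1 ^ p := rpow_pos_of_pos ht1 p
  have ht2p : (0:ℝ) < t2 ^ p := rpow_pos_of_pos ht2 p
  have hS : (0:ℝ) < b * t1 + (1 - b) * t2 :=
    add_pos (mul_pos hb0 ht1) (mul_pos hb1' ht2)
  have hSp : (0:ℝ) < b * t1 ^ p + (1 - b) * t2 ^ p :=
    add_pos (mul_pos hb0 ht1p) (mul_pos hb1' ht2p)
  rcases lt_or_gt_of_ne hp0 with hpneg | hppos
  · -- p < 0
    have hgm2 : t1 ^ b * t2 ^ (1 - b) ≤ b * t1 + (1 - b) * t2 :=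
      Real.geom_mean_le_arith_mean2_weighted hb0.le hb1'.le ht1.le ht2.le (by ring)
    have h1 : (b * t1 + (1 - b) * t2) ^ p ≤ (t1 ^ b * t2 ^ (1 - b)) ^ p :=
      rpow_le_rpow_of_nonpos (by positivity) hgm2 hpneg.le
    have h2 : (t1 ^ b * t2 ^ (1 - b)) ^ p = (t1 ^ p) ^ b * (t2 ^ p) ^ (1 - b) := by
      rw [Real.mul_rpow (by positivity) (by positivity), ← Real.rpow_mul ht1.le,
        ← Real.rpow_mul ht2.le, ← Real.rpow_mul ht1.le, ← Real.rpow_mul ht2.le,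
        mul_comm b p, mul_comm (1 - b) p]
    have hgm : (t1 ^ p) ^ b * (t2 ^ p) ^ (1 - b) ≤ b * t1 ^ p + (1 - b) * t2 ^ p :=
      Real.geom_mean_le_arith_mean2_weighted hb0.le hb1'.le ht1p.le ht2p.le (by ring)
    have key : (b * t1 + (1 - b) * t2) ^ p ≤ b * t1 ^ p + (1 - b) * t2 ^ p := by
      calc (b * t1 + (1 - b) * t2) ^ p ≤ (t1 ^ b * t2 ^ (1 - b)) ^ p := h1
        _ = (t1 ^ p) ^ b * (t2 ^ p) ^ (1 - b) := h2
        _ ≤ b * t1 ^ p + (1 - b) * t2 ^ p := hgm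
    have h3 := rpow_le_rpow_of_nonpos (rpow_pos_of_pos hS p) key
      (by rw [one_div]; exact inv_nonpos.mpr hpneg.le : 1 / p ≤ 0)
    rwa [← Real.rpow_mul hS.le, mul_one_div, div_self hp0, rpow_one] at h3
  · -- 0 < p < 1
    have hc := (Real.concaveOn_rpow hppos.le hp1.le).2 (Set.mem_Ici.2 ht1.le)
      (Set.mem_Ici.2 ht2.le) hb0.le hb1'.le (by ring)
    simp only [smul_eq_mul] at hc
    have h3 := rpow_le_rpow hSp.le hc (by positivity : (0:ℝ) ≤ 1 / p)
    rwa [← Real.rpow_mul hS.le, mul_one_div, div_self hp0, rpow_one] at h3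

/-- Tangent-line (reverse Hölder) bound for the CES aggregator. -/
private lemma ces_tangent {p a z1 z2 x1 x2 : ℝ} (hp1 : p < 1) (hp0 : p ≠ 0)
    (ha0 : 0 < a) (ha1 : a < 1) (hz1 : 0 < z1) (hz2 : 0 < z2)
    (hx1 : 0 < x1) (hx2 : 0 < x2) :
    (a * z1 ^ p + (1 - a) * z2 ^ p) ^ ((p - 1) / p) *
        (a * x1 ^ p + (1 - a) * x2 ^ p) ^ (1 / p)
      ≤ a * z1 ^ (p - 1) * x1 + (1 - a) * z2 ^ (p - 1) * x2 := by
  have ha1' : (0:ℝ) < 1 - a := by linarith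
  have hz1p : (0:ℝ) < z1 ^ p := rpow_pos_of_pos hz1 p
  have hz2p : (0:ℝ) < z2 ^ p := rpow_pos_of_pos hz2 p
  have hx1p : (0:ℝ) < x1 ^ p := rpow_pos_of_pos hx1 p
  have hx2p : (0:ℝ) < x2 ^ p := rpow_pos_of_pos hx2 p
  set Z := a * z1 ^ p + (1 - a) * z2 ^ p with hZ
  have hZpos : 0 < Z := add_pos (mul_pos ha0 hz1p) (mul_pos ha1' hz2p)
  have hXpos : (0:ℝ) < a * x1 ^ p + (1 - a) * x2 ^ p :=
    add_pos (mul_pos ha0 hx1p) (mul_pos ha1' hx2p)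
  set b := a * z1 ^ p / Z with hb
  have hb0 : 0 < b := div_pos (mul_pos ha0 hz1p) hZpos
  have hb1 : b < 1 := by
    rw [hb, div_lt_one hZpos, hZ]; nlinarith
  have h1b : 1 - b = (1 - a) * z2 ^ p / Z := by
    have hs : b + (1 - a) * z2 ^ p / Z = 1 := by
      rw [hb, ← add_div, ← hZ, div_self hZpos.ne']
    linarith
  have hpm := pm_le_am hp1 hp0 hb0 hb1 (div_pos hx1 hz1) (div_pos hx2 hz2)
  have hz1m : z1 ^ (p - 1) = z1 ^ p / z1 := by
    rw [Real.rpow_sub hz1, Real.rpow_one]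
  have hz2m : z2 ^ (p - 1) = z2 ^ p / z2 := by
    rw [Real.rpow_sub hz2, Real.rpow_one]
  have e1 : b * (x1 / z1) + (1 - b) * (x2 / z2)
      = (a * z1 ^ (p - 1) * x1 + (1 - a) * z2 ^ (p - 1) * x2) / Z := by
    rw [hb, h1b, hz1m, hz2m]; field_simp
  have e2 : b * (x1 / z1) ^ p + (1 - b) * (x2 / z2) ^ p
      = (a * x1 ^ p + (1 - a) * x2 ^ p) / Z := by
    rw [hb, h1b, Real.div_rpow hx1.le hz1.le, Real.div_rpow hx2.le hz2.le]
    field_simp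
  rw [e1, e2, Real.div_rpow hXpos.le hZpos.le] at hpm
  have hZr : Z ^ ((p - 1) / p) = Z / Z ^ (1 / p) := by
    rw [show (p - 1) / p = 1 - 1 / p by field_simp, Real.rpow_sub hZpos, Real.rpow_one]
  have hZp : (0:ℝ) < Z ^ (1 / p) := rpow_pos_of_pos hZpos _
  rw [hZr]
  calc Z / Z ^ (1 / p) * ((a * x1 ^ p + (1 - a) * x2 ^ p) ^ (1 / p))
      = Z * ((a * x1 ^ p + (1 - a) * x2 ^ p) ^ (1 / p) / Z ^ (1 / p)) := by ring
    _ ≤ Z * ((a * z1 ^ (p - 1) * x1 + (1 - a) * z2 ^ (p - 1) * x2) / Z) :=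
        mul_le_mul_of_nonneg_left hpm hZpos.le
    _ = a * z1 ^ (p - 1) * x1 + (1 - a) * z2 ^ (p - 1) * x2 := by
        field_simp

/-- Concavity (two-point form) of the CES aggregator. -/
private lemma ces_concave_pts {q a t u x1 x2 y1 y2 : ℝ} (hp1 : q < 1) (hp0 : q ≠ 0)
    (ha0 : 0 < a) (ha1 : a < 1) (hx1 : 0 < x1) (hx2 : 0 < x2)
    (hy1 : 0 < y1) (hy2 : 0 < y2) (ht : 0 ≤ t) (hu : 0 ≤ u) (htu : t + u = 1) :
    t * (a * x1 ^ q + (1 - a) * x2 ^ q) ^ (1 / q)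
      + u * (a * y1 ^ q + (1 - a) * y2 ^ q) ^ (1 / q)
      ≤ (a * (t * x1 + u * y1) ^ q + (1 - a) * (t * x2 + u * y2) ^ q) ^ (1 / q) := by
  have ha1' : (0:ℝ) < 1 - a := by linarith
  have hz1 : 0 < t * x1 + u * y1 := by
    rcases lt_or_eq_of_le ht with h | h
    · have : 0 ≤ u * y1 := mul_nonneg hu hy1.le
      nlinarith
    · have hu1 : u = 1 := by linarith
      rw [← h, hu1]; simpa using hy1
  have hz2 : 0 < t * x2 + u * y2 := by
    rcases lt_or_eq_of_le ht with h | h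
    · have : 0 ≤ u * y2 := mul_nonneg hu hy2.le
      nlinarith
    · have hu1 : u = 1 := by linarith
      rw [← h, hu1]; simpa using hy2
  set z1 := t * x1 + u * y1
  set z2 := t * x2 + u * y2
  set Z := a * z1 ^ q + (1 - a) * z2 ^ q with hZ
  have hZpos : 0 < Z :=
    add_pos (mul_pos ha0 (rpow_pos_of_pos hz1 q)) (mul_pos ha1' (rpow_pos_of_pos hz2 q))
  have hE : (0:ℝ) < Z ^ ((q - 1) / q) := rpow_pos_of_pos hZpos _
  have htx := ces_tangent hp1 hp0 ha0 ha1 hz1 hz2 hx1 hx2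
  have hty := ces_tangent hp1 hp0 ha0 ha1 hz1 hz2 hy1 hy2
  have hsum : t * (a * z1 ^ (q - 1) * x1 + (1 - a) * z2 ^ (q - 1) * x2)
      + u * (a * z1 ^ (q - 1) * y1 + (1 - a) * z2 ^ (q - 1) * y2) = Z := by
    have h1 : z1 ^ (q - 1) * z1 = z1 ^ q := by
      rw [Real.rpow_sub hz1, Real.rpow_one]; field_simp
    have h2 : z2 ^ (q - 1) * z2 = z2 ^ q := by
      rw [Real.rpow_sub hz2, Real.rpow_one]; field_simp
    calc t * (a * z1 ^ (q - 1) * x1 + (1 - a) * z2 ^ (q - 1) * x2)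
        + u * (a * z1 ^ (q - 1) * y1 + (1 - a) * z2 ^ (q - 1) * y2)
        = a * (z1 ^ (q - 1) * z1) + (1 - a) * (z2 ^ (q - 1) * z2) := by
          simp only [z1, z2]; ring
      _ = Z := by rw [h1, h2]
  have hEZ : Z ^ ((q - 1) / q) * Z ^ (1 / q) = Z := by
    rw [← Real.rpow_add hZpos, show (q - 1) / q + 1 / q = 1 by (field_simp; ring), Real.rpow_one]
  have l1 := mul_le_mul_of_nonneg_left htx ht
  have l2 := mul_le_mul_of_nonneg_left hty hu
  have hmain : Z ^ ((q - 1) / q) *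
      (t * (a * x1 ^ q + (1 - a) * x2 ^ q) ^ (1 / q)
        + u * (a * y1 ^ q + (1 - a) * y2 ^ q) ^ (1 / q))
      ≤ Z ^ ((q - 1) / q) * Z ^ (1 / q) := by
    calc Z ^ ((q - 1) / q) *
        (t * (a * x1 ^ q + (1 - a) * x2 ^ q) ^ (1 / q)
          + u * (a * y1 ^ q + (1 - a) * y2 ^ q) ^ (1 / q))
        = t * (Z ^ ((q - 1) / q) * (a * x1 ^ q + (1 - a) * x2 ^ q) ^ (1 / q))
          + u * (Z ^ ((q - 1) / q) * (a * y1 ^ q + (1 - a) * y2 ^ q) ^ (1 / q)) := by ring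
      _ ≤ t * (a * z1 ^ (q - 1) * x1 + (1 - a) * z2 ^ (q - 1) * x2)
          + u * (a * z1 ^ (q - 1) * y1 + (1 - a) * z2 ^ (q - 1) * y2) := add_le_add l1 l2
      _ = Z := hsum
      _ = Z ^ ((q - 1) / q) * Z ^ (1 / q) := hEZ.symm
  exact le_of_mul_le_mul_left hmain hE

/-- the scalarization `φ(K,L) = λ̄₁K + λ̄₂L + λ̄₃(aK^(−r)+(1−a)L^(−r))^(−1/r)`
with `λ̄₁ < 0`, `λ̄₂ < 0`, `λ̄₃ > 0` is concave on the open positive quadrant. -/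
theorem scalarization_concave (a r l1 l2 l3 : ℝ)
    (ha0 : 0 < a) (ha1 : a < 1) (hr : -1 < r) (hr0 : r ≠ 0)
    (hl1 : l1 < 0) (hl2 : l2 < 0) (hl3 : 0 < l3) :
    ConcaveOn ℝ {p : ℝ × ℝ | 0 < p.1 ∧ 0 < p.2}
      (fun p => l1 * p.1 + l2 * p.2 +
        l3 * (a * p.1 ^ (-r) + (1 - a) * p.2 ^ (-r)) ^ (-1 / r)) := by
  have hq1 : -r < 1 := by linarith
  have hq0 : -r ≠ 0 := neg_ne_zero.mpr hr0
  have hexp : -1 / r = 1 / (-r) := by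
    rw [div_neg, neg_div]
  constructor
  · have hset : {p : ℝ × ℝ | 0 < p.1 ∧ 0 < p.2} = Set.Ioi (0:ℝ) ×ˢ Set.Ioi (0:ℝ) := rfl
    rw [hset]
    exact (convex_Ioi (0:ℝ)).prod (convex_Ioi (0:ℝ))
  · intro x hx y hy t u ht hu htu
    obtain ⟨hx1, hx2⟩ := hx
    obtain ⟨hy1, hy2⟩ := hy
    simp only [smul_eq_mul, Prod.fst_add, Prod.snd_add, Prod.smul_fst, Prod.smul_snd,
      smul_eq_mul]
    have key := ces_concave_pts hq1 hq0 ha0 ha1 hx1 hx2 hy1 hy2 ht hu htu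
    rw [hexp]
    nlinarith [mul_le_mul_of_nonneg_left key hl3.le]
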